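/- Let Q be a simple unital associative ring and let e₁, e₂ be idempotents of Q with eᵢ ≠ 0 and eᵢ ≠ 1 for i = 1, 2. Then e₁Q(1−e₁) = e₂Q(1−e₂) if and only if e₁Q = e₂Q. -/

import Mathlib

/-- A two-sided ideal: an additive subgroup `I` with `QI ⊆ I` and `IQ ⊆ I`. -/
def IsTwoSidedIdealSub {Q : Type*} [Ring Q] (I : AddSubgroup Q) : Prop :=
  (∀ a ∈ I, ∀ x : Q, x * a ∈ I) ∧ (∀ a ∈ I, ∀ x : Q, a * x ∈ I)

/-- In a simple ring, if `u Q v = 0` then `u = 0` or `v = 0`. -/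
lemma simple_mul_cancel {Q : Type*} [Ring Q]
    (hsimple : ∀ I : AddSubgroup Q, IsTwoSidedIdealSub I → I = ⊥ ∨ I = ⊤)
    (u v : Q) (h : ∀ x : Q, u * x * v = 0) : u = 0 ∨ v = 0 := by
  by_cases hu : u = 0
  · exact Or.inl hu
  right
  set S : Set Q := {z | ∃ x y : Q, z = x * u * y} with hS
  set I : AddSubgroup Q := AddSubgroup.closure S with hI
  have htwo : IsTwoSidedIdealSub I := by
    constructor
    · intro a ha x
      induction ha using AddSubgroup.closure_induction with
      | mem z hz =>
        obtain ⟨p, q, rfl⟩ := hz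
        exact AddSubgroup.subset_closure ⟨x * p, q, by simp [mul_assoc]⟩
      | zero => simpa using (AddSubgroup.zero_mem I)
      | add a b _ _ ha hb => simpa [mul_add] using I.add_mem ha hb
      | neg a _ ha => simpa [mul_neg] using I.neg_mem ha
    · intro a ha x
      induction ha using AddSubgroup.closure_induction with
      | mem z hz =>
        obtain ⟨p, q, rfl⟩ := hz
        exact AddSubgroup.subset_closure ⟨p, q * x, by simp [mul_assoc]⟩
      | zero => simpa using (AddSubgroup.zero_mem I)
      | add a b _ _ ha hb => simpa [add_mul] using I.add_mem ha hb
      | neg a _ ha => simpa [neg_mul] using I.neg_mem ha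
  have hne : I ≠ ⊥ := by
    intro hbot
    have : u ∈ I := AddSubgroup.subset_closure ⟨1, 1, by simp⟩
    rw [hbot] at this
    exact hu (by simpa using this)
  have htop : I = ⊤ := (hsimple I htwo).resolve_left hne
  have h1 : (1 : Q) ∈ I := htop ▸ AddSubgroup.mem_top 1
  have hker : I ≤ (AddMonoidHom.mulRight v).ker := by
    rw [hI, AddSubgroup.closure_le]
    rintro z ⟨p, q, rfl⟩
    simp only [SetLike.mem_coe, AddMonoidHom.mem_ker, AddMonoidHom.coe_mulRight]
    calc p * u * q * v = p * (u * q * v) := by simp [mul_assoc]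
      _ = 0 := by rw [h q, mul_zero]
  have := hker h1
  simpa using this

/-- In a simple unital ring, for nontrivial idempotents `e₁, e₂`,
`e₁Q(1 - e₁) = e₂Q(1 - e₂)` if and only if `e₁Q = e₂Q`. -/
theorem idempotent_corner_eq_iff {Q : Type*} [Ring Q]
    (hsimple : ∀ I : AddSubgroup Q, IsTwoSidedIdealSub I → I = ⊥ ∨ I = ⊤)
    (e₁ e₂ : Q) (he₁ : e₁ * e₁ = e₁) (he₂ : e₂ * e₂ = e₂)
    (h₁0 : e₁ ≠ 0) (h₁1 : e₁ ≠ 1) (h₂0 : e₂ ≠ 0) (h₂1 : e₂ ≠ 1) :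
    {y : Q | ∃ x : Q, y = e₁ * x * (1 - e₁)} = {y : Q | ∃ x : Q, y = e₂ * x * (1 - e₂)} ↔
      {y : Q | ∃ x : Q, y = e₁ * x} = {y : Q | ∃ x : Q, y = e₂ * x} := by
  constructor
  · intro hset
    -- For any x, e₁x(1-e₁) ∈ e₂Q(1-e₂), hence e₂ · (e₁x(1-e₁)) = e₁x(1-e₁).
    have key : ∀ (f g : Q), f * f = f → g * g = g →
        ({y : Q | ∃ x : Q, y = f * x * (1 - f)} ⊆ {y : Q | ∃ x : Q, y = g * x * (1 - g)}) →
        g ≠ 1 → f ≠ 1 → g * f = f := by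
      intro f g hf hg hsub hg1 hf1
      have habs : ∀ x : Q, ((1 - g) * f) * x * (1 - f) = 0 := by
        intro x
        obtain ⟨z, hz⟩ := hsub ⟨x, rfl⟩
        have : g * (f * x * (1 - f)) = f * x * (1 - f) := by
          rw [hz]
          calc g * (g * z * (1 - g)) = (g * g) * z * (1 - g) := by simp [mul_assoc]
            _ = g * z * (1 - g) := by rw [hg]
        calc ((1 - g) * f) * x * (1 - f)
            = f * x * (1 - f) - g * (f * x * (1 - f)) := by noncomm_ring
          _ = 0 := by rw [this, sub_self]
      rcases simple_mul_cancel hsimple _ _ habs with h | h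
      · have : g * f = f := by
          have := sub_eq_zero.mp (by simpa [sub_mul] using h)
          linear_combination (norm := noncomm_ring) this.symm
        exact this
      · exact absurd (by linear_combination (norm := noncomm_ring) -h) hf1
    have h21 : e₂ * e₁ = e₁ := key e₁ e₂ he₁ he₂ (le_of_eq hset) h₂1 h₁1
    have h12 : e₁ * e₂ = e₂ := key e₂ e₁ he₂ he₁ (le_of_eq hset.symm) h₁1 h₂1
    ext y
    constructor
    · rintro ⟨x, rfl⟩
      exact ⟨e₁ * x, by rw [← mul_assoc, h21]⟩
    · rintro ⟨x, rfl⟩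
      exact ⟨e₂ * x, by rw [← mul_assoc, h12]⟩
  · intro hset
    have h21 : e₂ * e₁ = e₁ := by
      have : e₁ ∈ {y : Q | ∃ x : Q, y = e₂ * x} := hset ▸ ⟨1, by simp⟩
      obtain ⟨x, hx⟩ := this
      rw [hx, ← mul_assoc, he₂]
    have h12 : e₁ * e₂ = e₂ := by
      have : e₂ ∈ {y : Q | ∃ x : Q, y = e₁ * x} := hset.symm ▸ ⟨1, by simp⟩
      obtain ⟨x, hx⟩ := this
      rw [hx, ← mul_assoc, he₁]
    ext y
    constructor
    · rintro ⟨x, rfl⟩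
      refine ⟨e₁ * x * (1 - e₁), ?_⟩
      have h1 : e₂ * (e₁ * x * (1 - e₁)) = e₁ * x * (1 - e₁) := by
        rw [← mul_assoc, ← mul_assoc, h21]
      have h2 : (e₁ * x * (1 - e₁)) * e₂ = 0 := by
        rw [mul_assoc, sub_mul, one_mul, h12, sub_self, mul_zero]
      linear_combination (norm := noncomm_ring) -h1 + h1 * e₂ + h2
    · rintro ⟨x, rfl⟩
      refine ⟨e₂ * x * (1 - e₂), ?_⟩
      have h1 : e₁ * (e₂ * x * (1 - e₂)) = e₂ * x * (1 - e₂) := by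
        rw [← mul_assoc, ← mul_assoc, h12]
      have h2 : (e₂ * x * (1 - e₂)) * e₁ = 0 := by
        rw [mul_assoc, sub_mul, one_mul, h21, sub_self, mul_zero]
      linear_combination (norm := noncomm_ring) -h1 + h1 * e₁ + h2
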